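/- Suppose there exists a (κ, λ)-gap in (ω^ω, ≤*) with κ, λ regular uncountable cardinals and κ > ℵ₁. Then PID_λ fails: there is a P-ideal ℐ of countable subsets of λ such that (A) there is no subset S of λ of cardinality ℵ₁ all of whose countable subsets lie in ℐ, and (B) λ is not a countable union of sets each of which has finite intersection with every member of ℐ. -/

import Mathlib

open Set Cardinal

/-- `f ≤* g`: `f n ≤ g n` for all but finitely many `n`. -/
def LeStar (f g : ℕ → ℕ) : Prop := {n | g n < f n}.Finite

/-- `(f, g)` (indexed by the ordinals below `κ.ord`, `lam.ord`) is a `(κ, λ)`-pregap. -/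
def IsPregap (κ lam : Cardinal.{0}) (f g : Ordinal → ℕ → ℕ) : Prop :=
  (∀ α < κ.ord, Monotone (f α)) ∧
  (∀ β < lam.ord, Monotone (g β)) ∧
  (∀ α₁ α₂ : Ordinal, α₁ ≤ α₂ → α₂ < κ.ord → LeStar (f α₁) (f α₂)) ∧
  (∀ β₁ β₂ : Ordinal, β₁ ≤ β₂ → β₂ < lam.ord → LeStar (g β₂) (g β₁)) ∧
  (∀ α < κ.ord, ∀ β < lam.ord, LeStar (f α) (g β))

/-- A `(κ, λ)`-pregap is a gap if no `h` interpolates between the two sides. -/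
def IsGap (κ lam : Cardinal.{0}) (f g : Ordinal → ℕ → ℕ) : Prop :=
  IsPregap κ lam f g ∧
    ¬ ∃ h : ℕ → ℕ, (∀ α < κ.ord, LeStar (f α) h) ∧ ∀ β < lam.ord, LeStar h (g β)

/-- `I` is a P-ideal of countable subsets of `S`. -/
def IsPIdealOn (I : Set (Set Ordinal)) (S : Set Ordinal) : Prop :=
  (∀ A ∈ I, A ⊆ S ∧ A.Countable) ∧
  (∀ A ∈ I, ∀ B ⊆ A, B ∈ I) ∧
  (∀ A ∈ I, ∀ B ∈ I, A ∪ B ∈ I) ∧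
  (∀ Q ⊆ I, Q.Countable → ∃ A ∈ I, ∀ B ∈ Q, (B \ A).Finite)

/-- All indices where `f α` exceeds `g β` are below `n`. -/
def GapP (f g : Ordinal → ℕ → ℕ) (α β : Ordinal) (n : ℕ) : Prop :=
  ∀ k, g β k < f α k → k < n

/-- `α` is a witness that `A` belongs to the gap ideal. -/
def GapWit (f g : Ordinal → ℕ → ℕ) (α : Ordinal) (A : Set Ordinal) : Prop :=
  ∀ n : ℕ, {β | β ∈ A ∧ GapP f g α β n}.Finite

/-- The gap ideal. -/
def GapIdl (κ lam : Cardinal.{0}) (f g : Ordinal → ℕ → ℕ) : Set (Set Ordinal) :=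
  {A | A ⊆ Set.Iio lam.ord ∧ A.Countable ∧ ∃ α < κ.ord, GapWit f g α A}

theorem GapP.mono {f g : Ordinal → ℕ → ℕ} {α β : Ordinal} {n m : ℕ}
    (h : GapP f g α β n) (hnm : n ≤ m) : GapP f g α β m :=
  fun k hk => (h k hk).trans_le hnm

theorem nat_strict_bound {S : Set ℕ} (h : S.Finite) : ∃ m, ∀ k ∈ S, k < m := by
  obtain ⟨b, hb⟩ := h.bddAbove
  exact ⟨b + 1, fun k hk => Nat.lt_succ_of_le (hb hk)⟩

theorem exists_gapP {κ lam : Cardinal.{0}} {f g : Ordinal → ℕ → ℕ}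
    (hpre : IsPregap κ lam f g) {α β : Ordinal} (hα : α < κ.ord) (hβ : β < lam.ord) :
    ∃ n, GapP f g α β n := by
  obtain ⟨m, hm⟩ := nat_strict_bound (hpre.2.2.2.2 α hα β hβ)
  exact ⟨m, fun k hk => hm k hk⟩

theorem GapWit.mono {κ lam : Cardinal.{0}} {f g : Ordinal → ℕ → ℕ}
    (hpre : IsPregap κ lam f g) {α₁ α₂ : Ordinal} {A : Set Ordinal}
    (h12 : α₁ ≤ α₂) (h2 : α₂ < κ.ord) (hw : GapWit f g α₁ A) : GapWit f g α₂ A := by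
  obtain ⟨m, hm⟩ := nat_strict_bound (hpre.2.2.1 α₁ α₂ h12 h2)
  intro n
  apply (hw (max n m)).subset
  rintro β ⟨hβA, hP⟩
  refine ⟨hβA, fun k hk => ?_⟩
  by_cases hkm : k < m
  · exact hkm.trans_le (le_max_right n m)
  · have hle : f α₁ k ≤ f α₂ k := le_of_not_gt fun h => hkm (hm k h)
    exact (hP k (hk.trans_le hle)).trans_le (le_max_left n m)

theorem gapIdl_isPIdeal {κ lam : Cardinal.{0}} {f g : Ordinal → ℕ → ℕ}
    (hκreg : κ.IsRegular) (hκunc : Cardinal.aleph0 < κ) (hpre : IsPregap κ lam f g) :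
    IsPIdealOn (GapIdl κ lam f g) (Set.Iio lam.ord) := by
  have h0 : (0 : Ordinal) < κ.ord := by
    rw [← Cardinal.ord_zero]
    exact Cardinal.ord_lt_ord.2 (aleph0_pos.trans hκunc)
  have hempty : (∅ : Set Ordinal) ∈ GapIdl κ lam f g := by
    refine ⟨empty_subset _, countable_empty, 0, h0, fun n => ?_⟩
    apply Set.Finite.subset (Set.finite_empty)
    rintro β ⟨hβ, -⟩
    exact hβ
  refine ⟨fun A hA => ⟨hA.1, hA.2.1⟩, ?_, ?_, ?_⟩
  · rintro A ⟨hAs, hAc, α, hα, hw⟩ B hBA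
    refine ⟨hBA.trans hAs, hAc.mono hBA, α, hα, fun n => (hw n).subset ?_⟩
    rintro β ⟨hβ, hP⟩
    exact ⟨hBA hβ, hP⟩
  · rintro A ⟨hAs, hAc, α₁, hα₁, hw₁⟩ B ⟨hBs, hBc, α₂, hα₂, hw₂⟩
    refine ⟨union_subset hAs hBs, hAc.union hBc, max α₁ α₂, max_lt hα₁ hα₂, fun n => ?_⟩
    have hw₁' := GapWit.mono hpre (le_max_left α₁ α₂) (max_lt hα₁ hα₂) hw₁
    have hw₂' := GapWit.mono hpre (le_max_right α₁ α₂) (max_lt hα₁ hα₂) hw₂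
    apply ((hw₁' n).union (hw₂' n)).subset
    rintro β ⟨hβ | hβ, hP⟩
    · exact Or.inl ⟨hβ, hP⟩
    · exact Or.inr ⟨hβ, hP⟩
  · intro Q hQI hQc
    rcases Q.eq_empty_or_nonempty with rfl | hQne
    · exact ⟨∅, hempty, fun B hB => absurd hB (notMem_empty B)⟩
    obtain ⟨e, rfl⟩ := hQc.exists_eq_range hQne
    have hmem : ∀ i : ℕ, e i ∈ GapIdl κ lam f g := fun i => hQI (mem_range_self i)
    choose hsub hcnt α hακ hwit using hmem
    set αs : Ordinal := ⨆ i, α i with hαs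
    have hαsκ : αs < κ.ord := by
      apply Ordinal.iSup_lt_ord _ hακ
      rw [Cardinal.mk_nat, hκreg.cof_eq]
      exact hκunc
    have hle : ∀ i, α i ≤ αs := fun i => Ordinal.le_iSup α i
    have hwit' : ∀ i, GapWit f g αs (e i) := fun i =>
      GapWit.mono hpre (hle i) hαsκ (hwit i)
    set A : Set Ordinal := ⋃ i, {β | β ∈ e i ∧ ¬ GapP f g αs β i} with hA
    have hAI : A ∈ GapIdl κ lam f g := by
      refine ⟨?_, ?_, αs, hαsκ, ?_⟩
      · exact iUnion_subset fun i β hβ => hsub i hβ.1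
      · exact countable_iUnion fun i => (hcnt i).mono fun β hβ => hβ.1
      · intro n
        have hfin : (⋃ i ∈ Finset.range n, {β | β ∈ e i ∧ GapP f g αs β n}).Finite :=
          (Finset.range n).finite_toSet.biUnion fun i _ => (hwit' i n)
        apply hfin.subset
        rintro β ⟨hβA, hP⟩
        obtain ⟨_, ⟨i, rfl⟩, hβ, hnP⟩ := hβA
        have hin : i < n := by
          by_contra hn
          exact hnP (hP.mono (le_of_not_gt hn))
        exact mem_biUnion (Finset.mem_coe.2 (Finset.mem_range.2 hin)) ⟨hβ, hP⟩
    refine ⟨A, hAI, ?_⟩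
    rintro B ⟨j, rfl⟩
    apply (hwit' j j).subset
    rintro β ⟨hβe, hβA⟩
    refine ⟨hβe, ?_⟩
    by_contra hnP
    exact hβA (mem_iUnion.2 ⟨j, hβe, hnP⟩)

theorem exists_ord_bound {κ : Cardinal.{0}} (hκreg : κ.IsRegular) {ι : Type 1}
    (hι : #ι < Cardinal.lift.{1} κ) (α : ι → Ordinal.{0}) (hα : ∀ i, α i < κ.ord) :
    ∃ αs, αs < κ.ord ∧ ∀ i, α i ≤ αs := by
  set R : Set Ordinal.{0} := Set.range α with hR
  have hRsub : R ⊆ Set.Iio κ.ord := range_subset_iff.2 hα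
  have hsmall : Small.{0} R := small_subset hRsub
  set φ : Shrink.{0} R → Ordinal.{0} := fun x => ((equivShrink R).symm x : Ordinal) with hφ
  have hφκ : ∀ x, φ x < κ.ord := fun x => hRsub ((equivShrink R).symm x).2
  have hcard : #(Shrink.{0} R) < κ := by
    rw [← Cardinal.lift_lt.{0, 1}, Cardinal.lift_mk_shrink'']
    exact Cardinal.mk_range_le.trans_lt hι
  have hsup : iSup φ < κ.ord := by
    apply Ordinal.iSup_lt_ord _ hφκ
    rwa [hκreg.cof_eq]
  refine ⟨iSup φ, hsup, fun i => ?_⟩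
  have hmem : α i ∈ R := mem_range_self i
  have : α i = φ (equivShrink R ⟨α i, hmem⟩) := by simp [hφ]
  rw [this]
  exact Ordinal.le_iSup φ _

theorem gapIdl_not_A {κ lam : Cardinal.{0}} {f g : Ordinal → ℕ → ℕ}
    (hκreg : κ.IsRegular) (hκ : Cardinal.aleph 1 < κ) (hpre : IsPregap κ lam f g) :
    ¬ (∃ S : Set Ordinal, S ⊆ Set.Iio lam.ord ∧ #S = Cardinal.aleph 1 ∧
        ∀ Z ⊆ S, Z.Countable → Z ∈ GapIdl κ lam f g) := by
  rintro ⟨S, hSsub, hScard, hSall⟩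
  set T := (Cardinal.aleph.{1} 1).ord.ToType with hT
  haveI : IsWellOrder T (· < ·) := isWellOrder_lt
  have hmkT : #T = Cardinal.aleph.{1} 1 := by
    rw [hT, Cardinal.mk_toType, Cardinal.card_ord]
  have hTS : #T = #S := by rw [hmkT, hScard]
  obtain ⟨e⟩ := Cardinal.eq.1 hTS
  set Z : T → Set Ordinal := fun ξ => (fun x : T => (e x : Ordinal)) '' (Set.Iio ξ) with hZ
  have hZS : ∀ ξ, Z ξ ⊆ S := by
    rintro ξ β ⟨x, -, rfl⟩
    exact (e x).2
  have hZc : ∀ ξ, (Z ξ).Countable := by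
    intro ξ
    apply Set.Countable.image
    rw [countable_iff_lt_aleph_one]
    exact Cardinal.mk_Iio_ord_toType ξ
  have hZI : ∀ ξ, Z ξ ∈ GapIdl κ lam f g := fun ξ => hSall _ (hZS ξ) (hZc ξ)
  choose α hακ hwit using fun ξ => (hZI ξ).2.2
  have hmkTκ : #T < Cardinal.lift.{1} κ := by
    rw [hmkT]
    exact Cardinal.aleph_one_lt_lift.2 hκ
  obtain ⟨αs, hαsκ, hαsle⟩ := exists_ord_bound hκreg hmkTκ α hακ
  have hwit' : ∀ ξ, GapWit f g αs (Z ξ) := fun ξ =>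
    GapWit.mono hpre (hαsle ξ) hαsκ (hwit ξ)
  have hfin : ∀ n : ℕ, {β | β ∈ S ∧ GapP f g αs β n}.Finite := by
    intro n
    by_contra hinf
    have hinf2 : {β | β ∈ S ∧ GapP f g αs β n}.Infinite := hinf
    obtain z := hinf2.natEmbedding
    set x : ℕ → T := fun i => e.symm ⟨(z i).1, (z i).2.1⟩ with hx
    have hxbd : ∃ ξ : T, ∀ y ∈ Set.range x, y < ξ := by
      by_contra hcon
      push_neg at hcon
      have hcof : Order.cof T ≤ #(Set.range x) :=
        Order.cof_le (fun a => by obtain ⟨y, hy, hle⟩ := hcon a; exact ⟨y, hy, hle⟩)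
      have h2 : Order.cof T = Cardinal.aleph.{1} 1 :=
        (Ordinal.cof_toType _).trans Cardinal.isRegular_aleph_one.cof_eq
      rw [h2] at hcof
      exact absurd (hcof.trans (Set.countable_range x).le_aleph0)
        (not_le.2 Cardinal.aleph0_lt_aleph_one)
    obtain ⟨ξ, hξ⟩ := hxbd
    have hmem : ∀ i, (z i).1 ∈ {β | β ∈ Z ξ ∧ GapP f g αs β n} := by
      intro i
      refine ⟨⟨x i, hξ _ (mem_range_self i), ?_⟩, (z i).2.2⟩
      simp [hx]
    have hinj : Function.Injective fun i => (z i).1 := by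
      intro i j hij
      exact z.injective (Subtype.ext hij)
    exact (infinite_range_of_injective hinj) ((hwit' ξ n).subset (range_subset_iff.2 hmem))
  have hScnt : S.Countable := by
    have hsub : S ⊆ ⋃ n : ℕ, {β | β ∈ S ∧ GapP f g αs β n} := by
      intro β hβ
      obtain ⟨n, hn⟩ := exists_gapP hpre hαsκ (hSsub hβ)
      exact mem_iUnion.2 ⟨n, hβ, hn⟩
    exact (countable_iUnion fun n => (hfin n).countable).mono hsub
  rw [← le_aleph0_iff_set_countable, hScard] at hScnt
  exact absurd hScnt (not_le.2 Cardinal.aleph0_lt_aleph_one)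

theorem gapIdl_not_B {κ lam : Cardinal.{0}} {f g : Ordinal → ℕ → ℕ}
    (hlamreg : lam.IsRegular) (hlamunc : Cardinal.aleph0 < lam)
    (hgap : IsGap κ lam f g) :
    ¬ (∃ B : ℕ → Set Ordinal, (⋃ n, B n) = Set.Iio lam.ord ∧
        ∀ n, ∀ A ∈ GapIdl κ lam f g, (B n ∩ A).Finite) := by
  obtain ⟨hpre, hnoh⟩ := hgap
  rintro ⟨B, hBU, hBfin⟩
  have h0lam : (0 : Ordinal) < lam.ord := by
    rw [← Cardinal.ord_zero]
    exact Cardinal.ord_lt_ord.2 (aleph0_pos.trans hlamunc)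
  have hunb : ∃ n, ∀ b < lam.ord, ∃ β ∈ B n, b ≤ β := by
    by_contra hn
    push_neg at hn
    choose b hblt hbd using hn
    have hsup : (⨆ n, b n) < lam.ord := by
      apply Ordinal.iSup_lt_ord _ hblt
      rw [Cardinal.mk_nat, hlamreg.cof_eq]
      exact hlamunc
    have hmem : (⨆ n, b n) ∈ ⋃ n, B n := by rw [hBU]; exact hsup
    obtain ⟨_, ⟨n, rfl⟩, hn'⟩ := hmem
    exact absurd (Ordinal.le_iSup b n) (not_le.2 (hbd n _ hn'))
  obtain ⟨n₀, hunb⟩ := hunb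
  set C := B n₀ with hC
  have hCsub : C ⊆ Set.Iio lam.ord := by rw [← hBU]; exact subset_iUnion B n₀
  have hCne : C.Nonempty := by
    obtain ⟨β, hβ, -⟩ := hunb 0 h0lam
    exact ⟨β, hβ⟩
  have hbound : ∀ α, α < κ.ord → ∃ N, ∀ β ∈ C, GapP f g α β N := by
    intro α hα
    by_contra hno
    push_neg at hno
    choose φ hφC hφP using hno
    have hex : ∀ N : ℕ, ∃ m, GapP f g α (φ N) m := fun N =>
      exists_gapP hpre hα (hCsub (hφC N))
    choose c hc using hex
    set Nf : ℕ → ℕ := fun i => Nat.rec 0 (fun _ Nj => max (Nj + 1) (c Nj)) i with hNf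
    have hNfsucc : ∀ i, Nf (i + 1) = max (Nf i + 1) (c (Nf i)) := fun i => rfl
    have hNmono : ∀ i j, i ≤ j → Nf i ≤ Nf j := by
      intro i j hij
      induction j with
      | zero => simp [Nat.le_zero.1 hij]
      | succ j ih =>
        rcases Nat.lt_or_ge i (j + 1) with h | h
        · refine (ih (Nat.lt_succ_iff.1 h)).trans ?_
          rw [hNfsucc]
          exact (Nat.le_succ (Nf j)).trans (le_max_left _ _)
        · have : i = j + 1 := le_antisymm hij h
          rw [this]
    have hNstrict : ∀ i, i ≤ Nf i := by
      intro i
      induction i with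
      | zero => exact Nat.zero_le _
      | succ i ih =>
        rw [hNfsucc]
        exact le_trans (Nat.succ_le_succ ih) (le_max_left _ _)
    have hkey : ∀ j i, j < i → GapP f g α (φ (Nf j)) (Nf i) := by
      intro j i hji
      have h1 : c (Nf j) ≤ Nf (j + 1) := by
        rw [hNfsucc]
        exact le_max_right _ _
      exact (hc (Nf j)).mono (h1.trans (hNmono _ _ hji))
    have hinj : Function.Injective fun i => φ (Nf i) := by
      intro i j hij
      simp only at hij
      rcases lt_trichotomy i j with h | h | h
      · exact absurd (hij ▸ hkey i j h) (hφP (Nf j))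
      · exact h
      · exact absurd (hij ▸ hkey j i h) (hφP (Nf i))
    set A := Set.range fun i => φ (Nf i) with hA
    have hAC : A ⊆ C := by
      rintro β ⟨i, rfl⟩
      exact hφC _
    have hAI : A ∈ GapIdl κ lam f g := by
      refine ⟨hAC.trans hCsub, countable_range _, α, hα, ?_⟩
      intro m
      apply ((Set.finite_Iio m).image fun i => φ (Nf i)).subset
      rintro β ⟨⟨i, rfl⟩, hP⟩
      refine ⟨i, ?_, rfl⟩
      by_contra hge
      have hm : m ≤ Nf i := (le_of_not_gt hge).trans (hNstrict i)
      exact hφP (Nf i) (hP.mono hm)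
    exact (infinite_range_of_injective hinj)
      ((hBfin n₀ A hAI).subset fun β hβ => ⟨hAC hβ, hβ⟩)
  choose N hN using hbound
  set h : ℕ → ℕ := fun k => sInf ((fun β => g β k) '' C) with hh
  apply hnoh
  refine ⟨h, ?_, ?_⟩
  · intro α hα
    apply Set.Finite.subset (Set.finite_Iio (N α hα))
    intro k hk
    obtain ⟨β, hβC, hβk⟩ := Nat.sInf_mem (hCne.image fun β => g β k)
    have hgf : g β k < f α k := lt_of_eq_of_lt hβk hk
    exact hN α hα β hβC k hgf
  · intro β hβ
    obtain ⟨β', hβ'C, hββ'⟩ := hunb β hβ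
    apply Set.Finite.subset (hpre.2.2.2.1 β β' hββ' (hCsub hβ'C))
    intro k hk
    have hle : h k ≤ g β' k := Nat.sInf_le ⟨β', hβ'C, rfl⟩
    exact lt_of_lt_of_le hk hle

/-- If there is a `(κ, λ)`-gap with `κ, λ` regular uncountable and `κ > ℵ₁`, then
PID_λ fails: there is a P-ideal of countable subsets of `λ` for which both alternatives
of the P-ideal dichotomy fail. -/
theorem pid_fails_of_gap (κ lam : Cardinal.{0}) (hκreg : κ.IsRegular)
    (hlamreg : lam.IsRegular) (hκunc : Cardinal.aleph0 < κ)
    (hlamunc : Cardinal.aleph0 < lam) (hκ : Cardinal.aleph 1 < κ)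
    (f g : Ordinal → ℕ → ℕ) (hgap : IsGap κ lam f g) :
    ∃ I : Set (Set Ordinal), IsPIdealOn I (Set.Iio lam.ord) ∧
      ¬ (∃ S : Set Ordinal, S ⊆ Set.Iio lam.ord ∧ #S = Cardinal.aleph 1 ∧
          ∀ Z ⊆ S, Z.Countable → Z ∈ I) ∧
      ¬ (∃ B : ℕ → Set Ordinal, (⋃ n, B n) = Set.Iio lam.ord ∧
          ∀ n, ∀ A ∈ I, (B n ∩ A).Finite) := by
  exact ⟨GapIdl κ lam f g, gapIdl_isPIdeal hκreg hκunc hgap.1,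
    gapIdl_not_A hκreg hκ hgap.1, gapIdl_not_B hlamreg hlamunc hgap⟩
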